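/- Let (S, ≤) be a nonempty directed partially ordered (or preordered) set, and let {G_s}_{s∈S} be groups together with surjective group homomorphisms π^s_t : G_t → G_s for all s ≤ t, satisfying π^s_s = id and π^s_t ∘ π^t_u = π^s_u whenever s ≤ t ≤ u. Assume each bonding map π^s_t has finite kernel. Let L := {(x_s) ∈ ∏_{s∈S} G_s : π^s_t(x_t) = x_s whenever s ≤ t} be the inverse limit. Then for every s ∈ S the canonical projection π^s : L → G_s, (x_r) ↦ x_s, is surjective. -/

import Mathlib

open CategoryTheory Opposite

/-- For an inverse system of groups over a nonempty directed index set
with surjective bonding homomorphisms having finite kernels, the canonical projections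
from the inverse limit to the groups of the system are surjective. -/
theorem inverseLimit_projection_surjective
    {S : Type*} [Preorder S] [Nonempty S] [IsDirected S (· ≤ ·)]
    (G : S → Type*) [∀ s, Group (G s)]
    (π : ∀ ⦃s t : S⦄, s ≤ t → (G t →* G s))
    (hsurj : ∀ ⦃s t : S⦄ (h : s ≤ t), Function.Surjective (π h))
    (hid : ∀ s : S, π (le_refl s) = MonoidHom.id (G s))
    (hcomp : ∀ ⦃s t u : S⦄ (hst : s ≤ t) (htu : t ≤ u),
      (π hst).comp (π htu) = π (hst.trans htu))
    (hker : ∀ ⦃s t : S⦄ (h : s ≤ t), Finite (π h).ker)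
    (s : S) :
    Function.Surjective
      (fun x : {x : ∀ r : S, G r // ∀ ⦃r t : S⦄ (h : r ≤ t), π h (x t) = x r} =>
        x.1 s) := by
  intro g
  -- index set of elements above s
  let T := {r : S // s ≤ r}
  haveI : IsDirected T (· ≤ ·) := by
    constructor
    intro a b
    obtain ⟨c, hac, hbc⟩ := directed_of (· ≤ ·) a.1 b.1
    exact ⟨⟨c, a.2.trans hac⟩, hac, hbc⟩
  -- fiber functor
  have hcomp' : ∀ ⦃a b c : S⦄ (hab : a ≤ b) (hbc : b ≤ c) (x : G c),
      π hab (π hbc x) = π (hab.trans hbc) x := by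
    intro a b c hab hbc x
    exact DFunLike.congr_fun (hcomp hab hbc) x
  let F : Tᵒᵖ ⥤ Type _ :=
    { obj := fun r => {x : G r.unop.1 // π r.unop.2 x = g}
      map := fun {r t} f => TypeCat.ofHom fun x =>
        ⟨π (leOfHom f.unop) x.1, by rw [hcomp' t.unop.2 (leOfHom f.unop) x.1, x.2]⟩
      map_id := fun r => by
        ext x
        exact DFunLike.congr_fun (hid r.unop.1) x.1
      map_comp := fun {a b c} f h => by
        ext x
        exact (hcomp' (leOfHom h.unop) (leOfHom f.unop) x.1).symm }
  haveI : ∀ r : Tᵒᵖ, Nonempty (F.obj r) := by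
    intro r
    obtain ⟨x, hx⟩ := hsurj r.unop.2 g
    exact ⟨⟨x, hx⟩⟩
  haveI : ∀ r : Tᵒᵖ, Finite (F.obj r) := by
    intro r
    obtain ⟨x₀, hx₀⟩ := hsurj r.unop.2 g
    haveI := hker r.unop.2
    refine Finite.of_injective
      (fun x : F.obj r => (⟨x.1 * x₀⁻¹, by
        simp [MonoidHom.mem_ker, x.2, hx₀]⟩ : (π r.unop.2).ker))
      fun a b hab => ?_
    have := congrArg Subtype.val hab
    exact Subtype.ext (by simpa using this)
  obtain ⟨y, hy⟩ := nonempty_sections_of_finite_inverse_system F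
  -- extend the section from T to all of S
  have key : ∀ (r : S) (t t' : T) (h : r ≤ t.1) (h' : r ≤ t'.1),
      π h (y (op t)).1 = π h' (y (op t')).1 := by
    intro r t t' h h'
    obtain ⟨u, hu, hu'⟩ := directed_of (· ≤ ·) t t'
    have e1 : π hu (y (op u)).1 = (y (op t)).1 :=
      congrArg Subtype.val (hy (f := (homOfLE hu).op))
    have e2 : π hu' (y (op u)).1 = (y (op t')).1 :=
      congrArg Subtype.val (hy (f := (homOfLE hu').op))
    rw [← e1, ← e2, hcomp' h hu, hcomp' h' hu']
  have choose : ∀ r : S, ∃ t : T, r ≤ t.1 := by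
    intro r
    obtain ⟨c, hc, hc'⟩ := directed_of (· ≤ ·) r s
    exact ⟨⟨c, hc'⟩, hc⟩
  choose t ht using choose
  refine ⟨⟨fun r => π (ht r) (y (op (t r))).1, ?_⟩, ?_⟩
  · intro r r' h
    have : r ≤ (t r').1 := h.trans (ht r')
    rw [hcomp' h (ht r'), key r (t r') (t r) this (ht r)]
  · have hs : s ≤ (t s).1 := ht s
    show π (ht s) (y (op (t s))).1 = g
    have := key s (t s) (t s) hs (t s).2
    rw [this, (y (op (t s))).2]
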